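/- Let C := {f ∈ L¹[0,1] : f ≥ 0 a.e. and ∫₀¹ f = 1}, let C₀ be the convex hull of C ∪ {0}, let T : L¹[0,1] → L¹[0,1] be defined by (Tf)(t) = 2f(2t) for t ∈ [0,1/2] and 0 for t ∈ (1/2,1], and let R : C₀ → C be given by R(f) = (1 − ‖f‖₁)·𝟙 + f, where 𝟙 is the constant function 1. Set G := T ∘ R. Then: (i) ‖λf + (1−λ)g‖₁ = λ‖f‖₁ + (1−λ)‖g‖₁ for all f, g ∈ C₀ and λ ∈ [0,1], so R is an affine retraction of C₀ onto C and G : C₀ → C₀ is affine; (ii) ‖Gⁿf − Gⁿg‖₁ ≤ 2‖f − g‖₁ for all f, g ∈ C₀ and all n ∈ ℕ; (iii) G has no fixed point in C₀. -/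

import Mathlib

set_option maxHeartbeats 1000000


open MeasureTheory Filter Topology

/-- Lebesgue measure on `[0,1]`. -/
noncomputable def μ01 : Measure ℝ := volume.restrict (Set.Icc 0 1)

instance : IsFiniteMeasure μ01 := by
  constructor
  simp [μ01, Real.volume_Icc]

/-- The constant function `1` as an element of `L¹[0,1]`. -/
noncomputable def oneL1 : Lp ℝ 1 μ01 := (memLp_const (1 : ℝ)).toLp (fun _ => (1 : ℝ))

/-- `C = {f ∈ L¹[0,1] : f ≥ 0 a.e., ∫ f = 1}`. -/
noncomputable def posProbC : Set (Lp ℝ 1 μ01) :=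
  {f | (∀ᵐ t ∂μ01, 0 ≤ f t) ∧ ∫ t, f t ∂μ01 = 1}

/-- `C₀ = conv(C ∪ {0})`. -/
noncomputable def posProbC₀ : Set (Lp ℝ 1 μ01) :=
  convexHull ℝ (posProbC ∪ {(0 : Lp ℝ 1 μ01)})

/-- The retraction `R f = (1 - ‖f‖₁)·𝟙 + f`. -/
noncomputable def Rmap (f : Lp ℝ 1 μ01) : Lp ℝ 1 μ01 := (1 - ‖f‖) • oneL1 + f

/-! Helper lemmas -/

noncomputable def Tform (φ : ℝ → ℝ) : ℝ → ℝ := fun t => if t ≤ 1 / 2 then 2 * φ (2 * t) else 0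

lemma ae_double {p : ℝ → Prop} (hp : ∀ᵐ t ∂μ01, p t) :
    ∀ᵐ t ∂μ01, t ≤ 1 / 2 → p (2 * t) := by
  rw [ae_iff] at hp ⊢
  rw [μ01, Measure.restrict_apply' measurableSet_Icc] at hp ⊢
  have hsub : {t : ℝ | ¬(t ≤ 1 / 2 → p (2 * t))} ∩ Set.Icc 0 1 ⊆
      (fun t : ℝ => 2 * t) ⁻¹' ({t : ℝ | ¬p t} ∩ Set.Icc 0 1) := by
    rintro t ⟨ht, ht0, ht1⟩
    push_neg at ht
    refine Set.mem_preimage.2 ⟨ht.2, ?_, ?_⟩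
    · show (0:ℝ) ≤ 2 * t; linarith
    · show 2 * t ≤ (1:ℝ); linarith [ht.1]
  refine le_antisymm (le_trans (measure_mono hsub) ?_) zero_le
  rw [Real.volume_preimage_mul_left two_ne_zero, hp, mul_zero]

lemma μmem : ∀ᵐ t ∂μ01, t ∈ Set.Icc (0:ℝ) 1 := by
  rw [μ01]; exact ae_restrict_mem measurableSet_Icc

lemma μ01_univ : (μ01 Set.univ).toReal = 1 := by
  simp [μ01, Real.volume_Icc]

lemma integral_Tform (φ : ℝ → ℝ) : ∫ t, Tform φ t ∂μ01 = ∫ t, φ t ∂μ01 := by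
  have h1 : Tform φ = (Set.Iic (1/2 : ℝ)).indicator (fun t => 2 * φ (2 * t)) := by
    funext t
    simp [Tform, Set.indicator_apply, Set.mem_Iic]
  have h2 : Set.Icc (0:ℝ) 1 ∩ Set.Iic (1/2 : ℝ) = Set.Icc (0:ℝ) (1/2) := by
    ext t
    simp only [Set.mem_inter_iff, Set.mem_Iic, Set.mem_Icc]
    constructor
    · rintro ⟨⟨h0, _⟩, h⟩; exact ⟨h0, h⟩
    · rintro ⟨h0, h⟩; exact ⟨⟨h0, by linarith⟩, h⟩
  rw [μ01, h1, setIntegral_indicator measurableSet_Iic, h2]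
  rw [integral_Icc_eq_integral_Ioc, integral_Icc_eq_integral_Ioc,
    ← intervalIntegral.integral_of_le (by norm_num : (0:ℝ) ≤ 1/2),
    ← intervalIntegral.integral_of_le (by norm_num : (0:ℝ) ≤ 1)]
  have := intervalIntegral.integral_comp_mul_left (a := (0:ℝ)) (b := 1/2) φ two_ne_zero
  rw [intervalIntegral.integral_const_mul, this]
  norm_num
  ring

lemma abs_Tform (φ : ℝ → ℝ) (t : ℝ) : |Tform φ t| = Tform (fun x => |φ x|) t := by
  unfold Tform
  split_ifs <;> simp [abs_mul]

lemma Tform_congr {φ ψ : ℝ → ℝ} (h : φ =ᵐ[μ01] ψ) : Tform φ =ᵐ[μ01] Tform ψ := by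
  filter_upwards [ae_double (p := fun x => φ x = ψ x) h] with t ht
  unfold Tform
  split_ifs with h'
  · rw [ht h']
  · rfl

lemma Tform_add (φ ψ : ℝ → ℝ) : Tform (φ + ψ) = Tform φ + Tform ψ := by
  funext t
  simp only [Tform, Pi.add_apply]
  split_ifs <;> ring

lemma Tform_smul (c : ℝ) (φ : ℝ → ℝ) : Tform (c • φ) = c • Tform φ := by
  funext t
  simp only [Tform, Pi.smul_apply, smul_eq_mul]
  split_ifs <;> ring

lemma coe_combo (f g : Lp ℝ 1 μ01) (a b : ℝ) :
    ((a • f + b • g : Lp ℝ 1 μ01) : ℝ → ℝ) =ᵐ[μ01] fun t => a * f t + b * g t := by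
  filter_upwards [Lp.coeFn_add (a • f) (b • g), Lp.coeFn_smul a f, Lp.coeFn_smul b g]
    with t h1 h2 h3
  rw [h1]
  simp [h2, h3]

lemma integral_combo (f g : Lp ℝ 1 μ01) (a b : ℝ) :
    ∫ t, ((a • f + b • g : Lp ℝ 1 μ01) : ℝ → ℝ) t ∂μ01
      = a * ∫ t, f t ∂μ01 + b * ∫ t, g t ∂μ01 := by
  rw [integral_congr_ae (coe_combo f g a b),
    integral_add ((L1.integrable_coeFn f).const_mul a) ((L1.integrable_coeFn g).const_mul b),
    integral_const_mul, integral_const_mul]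

lemma norm_of_nonneg' (f : Lp ℝ 1 μ01) (hf : ∀ᵐ t ∂μ01, 0 ≤ (f : ℝ → ℝ) t) :
    ‖f‖ = ∫ t, (f : ℝ → ℝ) t ∂μ01 := by
  rw [L1.norm_eq_integral_norm]
  refine integral_congr_ae ?_
  filter_upwards [hf] with t ht
  simp [Real.norm_eq_abs, abs_of_nonneg ht]

lemma oneL1_ae : (oneL1 : ℝ → ℝ) =ᵐ[μ01] fun _ => 1 := MemLp.coeFn_toLp _

lemma integral_oneL1 : ∫ t, (oneL1 : ℝ → ℝ) t ∂μ01 = 1 := by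
  rw [integral_congr_ae oneL1_ae, integral_const, measureReal_def, μ01_univ, smul_eq_mul, one_mul]

lemma norm_oneL1 : ‖oneL1‖ = 1 := by
  rw [norm_of_nonneg' oneL1 (by filter_upwards [oneL1_ae] with t ht; rw [ht]; norm_num),
    integral_oneL1]

lemma C0_sub {f : Lp ℝ 1 μ01} (hf : f ∈ posProbC₀) :
    (∀ᵐ t ∂μ01, 0 ≤ (f : ℝ → ℝ) t) ∧ ∫ t, (f : ℝ → ℝ) t ∂μ01 ≤ 1 := by
  set D : Set (Lp ℝ 1 μ01) :=
    {g | (∀ᵐ t ∂μ01, 0 ≤ (g : ℝ → ℝ) t) ∧ ∫ t, (g : ℝ → ℝ) t ∂μ01 ≤ 1} with hD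
  have : posProbC₀ ⊆ D := by
    apply convexHull_min
    · rintro g (hg | hg)
      · exact ⟨hg.1, le_of_eq hg.2⟩
      · rcases hg with rfl
        constructor
        · filter_upwards [Lp.coeFn_zero ℝ 1 μ01] with t ht; rw [ht]; rfl
        · rw [integral_congr_ae (Lp.coeFn_zero ℝ 1 μ01)]; simp
    · rintro x ⟨hx1, hx2⟩ y ⟨hy1, hy2⟩ a b ha hb hab
      constructor
      · filter_upwards [coe_combo x y a b, hx1, hy1] with t h1 h2 h3
        rw [h1]
        exact add_nonneg (mul_nonneg ha h2) (mul_nonneg hb h3)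
      · rw [integral_combo]
        nlinarith
  exact this hf

lemma C_subset_C0 : posProbC ⊆ posProbC₀ :=
  Set.Subset.trans Set.subset_union_left (subset_convexHull ℝ _)

lemma coe_Rmap (f : Lp ℝ 1 μ01) :
    (Rmap f : ℝ → ℝ) =ᵐ[μ01] fun t => (1 - ‖f‖) + (f : ℝ → ℝ) t := by
  filter_upwards [Lp.coeFn_add ((1 - ‖f‖) • oneL1) f, Lp.coeFn_smul (1 - ‖f‖) oneL1, oneL1_ae]
    with t h1 h2 h3
  show (Rmap f : ℝ → ℝ) t = _
  rw [Rmap, h1]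
  simp [h2, h3]

lemma integral_Rmap (f : Lp ℝ 1 μ01) :
    ∫ t, (Rmap f : ℝ → ℝ) t ∂μ01 = (1 - ‖f‖) + ∫ t, (f : ℝ → ℝ) t ∂μ01 := by
  rw [integral_congr_ae (coe_Rmap f), integral_add (integrable_const _) (L1.integrable_coeFn f),
    integral_const, measureReal_def, μ01_univ, smul_eq_mul, one_mul]

/-- With `T` the doubling map `(Tf)(t) = 2f(2t)` (and `0` on `(1/2,1]`) and
`R f = (1-‖f‖₁)𝟙 + f`, the map `G = T ∘ R` is an affine self-map of `C₀ = conv(C ∪ {0})`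
whose iterates are `2`-Lipschitz, yet `G` has no fixed point in `C₀`. Moreover the norm is
affine on `C₀` and `R` is an affine retraction of `C₀` onto `C`. -/
theorem G_affine_two_lipschitz_no_fixedPoint
    (T : Lp ℝ 1 μ01 → Lp ℝ 1 μ01)
    (hT : ∀ f : Lp ℝ 1 μ01, ∀ᵐ t ∂μ01,
      (T f : ℝ → ℝ) t = if t ≤ 1 / 2 then 2 * (f : ℝ → ℝ) (2 * t) else 0) :
    (∀ f ∈ posProbC₀, ∀ g ∈ posProbC₀, ∀ l : ℝ, 0 ≤ l → l ≤ 1 →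
      ‖l • f + (1 - l) • g‖ = l * ‖f‖ + (1 - l) * ‖g‖) ∧
    Set.MapsTo Rmap posProbC₀ posProbC ∧
    (∀ f ∈ posProbC, Rmap f = f) ∧
    (∀ f ∈ posProbC₀, ∀ g ∈ posProbC₀, ∀ l : ℝ, 0 ≤ l → l ≤ 1 →
      Rmap (l • f + (1 - l) • g) = l • Rmap f + (1 - l) • Rmap g) ∧
    Set.MapsTo (T ∘ Rmap) posProbC₀ posProbC₀ ∧
    (∀ f ∈ posProbC₀, ∀ g ∈ posProbC₀, ∀ l : ℝ, 0 ≤ l → l ≤ 1 →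
      (T ∘ Rmap) (l • f + (1 - l) • g) = l • (T ∘ Rmap) f + (1 - l) • (T ∘ Rmap) g) ∧
    (∀ n : ℕ, ∀ f ∈ posProbC₀, ∀ g ∈ posProbC₀,
      ‖(T ∘ Rmap)^[n] f - (T ∘ Rmap)^[n] g‖ ≤ 2 * ‖f - g‖) ∧
    (∀ f ∈ posProbC₀, (T ∘ Rmap) f ≠ f) := by
  -- basic T facts
  have hTae : ∀ f : Lp ℝ 1 μ01, (T f : ℝ → ℝ) =ᵐ[μ01] Tform (f : ℝ → ℝ) := by
    intro f
    filter_upwards [hT f] with t ht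
    rw [ht]; rfl
  have T_integral : ∀ f : Lp ℝ 1 μ01,
      ∫ t, (T f : ℝ → ℝ) t ∂μ01 = ∫ t, (f : ℝ → ℝ) t ∂μ01 := fun f =>
    (integral_congr_ae (hTae f)).trans (integral_Tform _)
  have T_norm : ∀ f : Lp ℝ 1 μ01, ‖T f‖ = ‖f‖ := by
    intro f
    rw [L1.norm_eq_integral_norm, L1.norm_eq_integral_norm]
    have h1 : (fun t => ‖(T f : ℝ → ℝ) t‖) =ᵐ[μ01] Tform (fun x => |(f : ℝ → ℝ) x|) := by
      filter_upwards [hTae f] with t ht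
      rw [Real.norm_eq_abs, ht, abs_Tform]
    rw [integral_congr_ae h1, integral_Tform]
    exact integral_congr_ae (ae_of_all _ fun t => (Real.norm_eq_abs _).symm)
  have T_add : ∀ a b : Lp ℝ 1 μ01, T (a + b) = T a + T b := by
    intro a b
    apply Lp.ext
    calc (T (a + b) : ℝ → ℝ) =ᵐ[μ01] Tform ((a + b : Lp ℝ 1 μ01) : ℝ → ℝ) := hTae _
      _ =ᵐ[μ01] Tform ((a : ℝ → ℝ) + (b : ℝ → ℝ)) := Tform_congr (Lp.coeFn_add a b)
      _ = Tform a + Tform b := Tform_add _ _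
      _ =ᵐ[μ01] (T a : ℝ → ℝ) + (T b : ℝ → ℝ) :=
        EventuallyEq.add (hTae a).symm (hTae b).symm
      _ =ᵐ[μ01] ((T a + T b : Lp ℝ 1 μ01) : ℝ → ℝ) := (Lp.coeFn_add _ _).symm
  have T_smul : ∀ (c : ℝ) (a : Lp ℝ 1 μ01), T (c • a) = c • T a := by
    intro c a
    apply Lp.ext
    calc (T (c • a) : ℝ → ℝ) =ᵐ[μ01] Tform ((c • a : Lp ℝ 1 μ01) : ℝ → ℝ) := hTae _
      _ =ᵐ[μ01] Tform (c • (a : ℝ → ℝ)) := Tform_congr (Lp.coeFn_smul c a)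
      _ = c • Tform a := Tform_smul _ _
      _ =ᵐ[μ01] ((c • T a : Lp ℝ 1 μ01) : ℝ → ℝ) := by
        filter_upwards [hTae a, Lp.coeFn_smul c (T a)] with t h1 h2
        rw [h2]
        simp only [Pi.smul_apply, smul_eq_mul]
        rw [h1]
  have T_sub : ∀ a b : Lp ℝ 1 μ01, T (a - b) = T a - T b := by
    intro a b
    have : a - b = a + (-1 : ℝ) • b := by module
    rw [this, T_add, T_smul]
    module
  have T_nonneg : ∀ f : Lp ℝ 1 μ01, (∀ᵐ t ∂μ01, 0 ≤ (f : ℝ → ℝ) t) →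
      ∀ᵐ t ∂μ01, 0 ≤ (T f : ℝ → ℝ) t := by
    intro f hf
    filter_upwards [hTae f, ae_double (p := fun x => 0 ≤ (f : ℝ → ℝ) x) hf] with t h1 h2
    rw [h1]
    by_cases hle : t ≤ 1 / 2
    · rw [Tform, if_pos hle]
      have := h2 hle
      linarith
    · rw [Tform, if_neg hle]
  -- membership lemmas
  have T_mem_C : ∀ f ∈ posProbC, T f ∈ posProbC := by
    rintro f ⟨h1, h2⟩
    exact ⟨T_nonneg f h1, (T_integral f).trans h2⟩
  have norm_C0 : ∀ f ∈ posProbC₀, ‖f‖ = ∫ t, (f : ℝ → ℝ) t ∂μ01 := fun f hf =>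
    norm_of_nonneg' f (C0_sub hf).1
  have norm_C0_le : ∀ f ∈ posProbC₀, ‖f‖ ≤ 1 := by
    intro f hf
    rw [norm_C0 f hf]
    exact (C0_sub hf).2
  have R_mem_C : ∀ f ∈ posProbC₀, Rmap f ∈ posProbC := by
    intro f hf
    obtain ⟨h1, h2⟩ := C0_sub hf
    have hn : ‖f‖ ≤ 1 := norm_C0_le f hf
    constructor
    · filter_upwards [coe_Rmap f, h1] with t ht hft
      rw [ht]
      have : (0:ℝ) ≤ 1 - ‖f‖ := by linarith
      linarith
    · rw [integral_Rmap, ← norm_C0 f hf]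
      ring
  have R_fix : ∀ f ∈ posProbC, Rmap f = f := by
    rintro f ⟨h1, h2⟩
    have : ‖f‖ = 1 := by rw [norm_of_nonneg' f h1, h2]
    rw [Rmap, this]
    simp
  -- norm is affine on C₀
  have hnormaff : ∀ f ∈ posProbC₀, ∀ g ∈ posProbC₀, ∀ l : ℝ, 0 ≤ l → l ≤ 1 →
      ‖l • f + (1 - l) • g‖ = l * ‖f‖ + (1 - l) * ‖g‖ := by
    intro f hf g hg l hl0 hl1
    obtain ⟨hfp, _⟩ := C0_sub hf
    obtain ⟨hgp, _⟩ := C0_sub hg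
    have hpos : ∀ᵐ t ∂μ01, 0 ≤ ((l • f + (1 - l) • g : Lp ℝ 1 μ01) : ℝ → ℝ) t := by
      filter_upwards [coe_combo f g l (1 - l), hfp, hgp] with t h1 h2 h3
      rw [h1]
      exact add_nonneg (mul_nonneg hl0 h2) (mul_nonneg (by linarith) h3)
    rw [norm_of_nonneg' _ hpos, integral_combo, norm_of_nonneg' f hfp, norm_of_nonneg' g hgp]
  -- R is affine on C₀
  have hRaff : ∀ f ∈ posProbC₀, ∀ g ∈ posProbC₀, ∀ l : ℝ, 0 ≤ l → l ≤ 1 →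
      Rmap (l • f + (1 - l) • g) = l • Rmap f + (1 - l) • Rmap g := by
    intro f hf g hg l hl0 hl1
    rw [Rmap, Rmap, Rmap, hnormaff f hf g hg l hl0 hl1]
    module
  have G_mem_C : ∀ f ∈ posProbC₀, (T ∘ Rmap) f ∈ posProbC := fun f hf =>
    T_mem_C _ (R_mem_C f hf)
  have G_maps : Set.MapsTo (T ∘ Rmap) posProbC₀ posProbC₀ := fun f hf =>
    C_subset_C0 (G_mem_C f hf)
  have G_aff : ∀ f ∈ posProbC₀, ∀ g ∈ posProbC₀, ∀ l : ℝ, 0 ≤ l → l ≤ 1 →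
      (T ∘ Rmap) (l • f + (1 - l) • g) = l • (T ∘ Rmap) f + (1 - l) • (T ∘ Rmap) g := by
    intro f hf g hg l hl0 hl1
    show T (Rmap (l • f + (1 - l) • g)) = l • T (Rmap f) + (1 - l) • T (Rmap g)
    rw [hRaff f hf g hg l hl0 hl1, T_add, T_smul, T_smul]
  -- Lipschitz part
  have hG1 : ∀ f ∈ posProbC₀, ∀ g ∈ posProbC₀,
      ‖(T ∘ Rmap) f - (T ∘ Rmap) g‖ ≤ 2 * ‖f - g‖ := by
    intro f hf g hg
    have hRdiff : Rmap f - Rmap g = (‖g‖ - ‖f‖) • oneL1 + (f - g) := by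
      rw [Rmap, Rmap]; module
    have h1 : ‖(T ∘ Rmap) f - (T ∘ Rmap) g‖ = ‖Rmap f - Rmap g‖ := by
      show ‖T (Rmap f) - T (Rmap g)‖ = _
      rw [← T_sub, T_norm]
    rw [h1, hRdiff]
    calc ‖(‖g‖ - ‖f‖) • oneL1 + (f - g)‖ ≤ ‖(‖g‖ - ‖f‖) • oneL1‖ + ‖f - g‖ := norm_add_le _ _
      _ = |‖g‖ - ‖f‖| + ‖f - g‖ := by rw [norm_smul, norm_oneL1, mul_one, Real.norm_eq_abs]
      _ ≤ ‖g - f‖ + ‖f - g‖ := by gcongr; exact abs_norm_sub_norm_le g f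
      _ = 2 * ‖f - g‖ := by rw [norm_sub_rev]; ring
  have hiter : ∀ n : ℕ, ∀ h ∈ posProbC, ∀ k ∈ posProbC,
      ‖(T ∘ Rmap)^[n] h - (T ∘ Rmap)^[n] k‖ = ‖h - k‖ := by
    intro n
    induction n with
    | zero => intro h _ k _; simp
    | succ n ih =>
      intro h hh k hk
      rw [Function.iterate_succ_apply, Function.iterate_succ_apply,
        ih _ (G_mem_C h (C_subset_C0 hh)) _ (G_mem_C k (C_subset_C0 hk))]
      show ‖T (Rmap h) - T (Rmap k)‖ = _
      rw [R_fix h hh, R_fix k hk, ← T_sub, T_norm]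
  have hLip : ∀ n : ℕ, ∀ f ∈ posProbC₀, ∀ g ∈ posProbC₀,
      ‖(T ∘ Rmap)^[n] f - (T ∘ Rmap)^[n] g‖ ≤ 2 * ‖f - g‖ := by
    intro n f hf g hg
    cases n with
    | zero => simpa using le_mul_of_one_le_left (norm_nonneg _) one_le_two
    | succ n =>
      rw [Function.iterate_succ_apply, Function.iterate_succ_apply,
        hiter n _ (G_mem_C f hf) _ (G_mem_C g hg)]
      exact hG1 f hf g hg
  -- no fixed point
  have hnofix : ∀ f ∈ posProbC₀, (T ∘ Rmap) f ≠ f := by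
    intro f hf hfix
    have hfC : f ∈ posProbC := hfix ▸ G_mem_C f hf
    have hTf : T f = f := by
      have := R_fix f hfC
      rwa [Function.comp_apply, this] at hfix
    have hTfae : (f : ℝ → ℝ) =ᵐ[μ01] Tform (f : ℝ → ℝ) := by
      have h := hTae f
      rw [hTf] at h
      exact h
    have key : ∀ n : ℕ, ∀ᵐ t ∂μ01, (1/2 : ℝ) ^ n < t → (f : ℝ → ℝ) t = 0 := by
      intro n
      induction n with
      | zero =>
        filter_upwards [μmem] with t ht h
        exfalso
        rw [pow_zero] at h
        linarith [ht.2]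
      | succ n ih =>
        filter_upwards [hTfae,
          ae_double (p := fun x => (1/2 : ℝ) ^ n < x → (f : ℝ → ℝ) x = 0) ih] with t h1 h2 hlt
        by_cases hle : t ≤ 1 / 2
        · have h2t : (1/2 : ℝ) ^ n < 2 * t := by
            rw [pow_succ] at hlt
            linarith
          rw [h1, Tform, if_pos hle, h2 hle h2t, mul_zero]
        · rw [h1, Tform, if_neg hle]
    have hne : ∀ᵐ t ∂μ01, t ≠ 0 := by
      rw [ae_iff]
      have hset : {t : ℝ | ¬t ≠ 0} = {0} := by ext t; simp
      rw [hset, μ01, Measure.restrict_apply (measurableSet_singleton 0)]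
      refine le_antisymm (le_trans (measure_mono Set.inter_subset_left) ?_) zero_le
      simp
    have h0 : ∀ᵐ t ∂μ01, (f : ℝ → ℝ) t = 0 := by
      filter_upwards [ae_all_iff.2 key, μmem, hne] with t ht hmem htne
      obtain ⟨n, hn⟩ := exists_pow_lt_of_lt_one
        (lt_of_le_of_ne hmem.1 (Ne.symm htne)) (by norm_num : (1/2 : ℝ) < 1)
      exact ht n hn
    have : (1:ℝ) = 0 := by
      rw [← hfC.2, integral_congr_ae h0, integral_zero]
    norm_num at this
  exact ⟨hnormaff, R_mem_C, R_fix, hRaff, G_maps, G_aff, hLip, hnofix⟩
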